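/- Fix λ ≥ 0 and define the per-sensor Lagrangian L(t) = (λ+c)·[α·(T−t)/(η·β·h) + (t/(η·h²))·f((T−t)/(R·β·t))] − a·log(1 + (T−t)/β) on (0, T]. Then the derivative of L at t = T is strictly negative if and only if λ > φ, where φ = a·η·h/(α + N₀·ln 2/(h·B·R)) − c is the crowd-sensing priority function. -/

import Mathlib

open Real Set

/-- The derivative of the per-sensor Lagrangian
`L(t) = (λ+c)[α(T−t)/(ηβh) + (t/(ηh²)) f((T−t)/(Rβt))] − a log(1+(T−t)/β)`,
with `f(x) = N₀(2^{x/B}−1)`, is strictly negative at `t = T` if and only if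
`λ > φ`, where `φ = aηh/(α + N₀ ln 2/(hBR)) − c` is the crowd-sensing
priority function. -/
theorem priority_function_threshold
    (N0 B a c α β h R η T lam : ℝ)
    (hN0 : 0 < N0) (hB : 0 < B) (ha : 0 < a) (hc : 0 < c) (hα : 0 < α)
    (hβ : 0 < β) (hh : 0 < h) (hR : 0 < R) (hη : 0 < η) (hT : 0 < T)
    (hlam : 0 ≤ lam) :
    deriv
        (fun t : ℝ =>
          (lam + c) * (α * (T - t) / (η * β * h)
            + (t / (η * h ^ 2)) *
              (N0 * ((2 : ℝ) ^ ((T - t) / (R * β * t) / B) - 1)))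
          - a * Real.log (1 + (T - t) / β)) T < 0
      ↔ lam > a * η * h / (α + N0 * Real.log 2 / (h * B * R)) - c := by
  have hlog : 0 < Real.log 2 := Real.log_pos one_lt_two
  -- derivative of the inner exponent u(t) = (T-t)/(R*β*t)/B at T
  have hu : HasDerivAt (fun t : ℝ => (T - t) / (R * β * t) / B)
      (-(1 / (R * β * T * B))) T := by
    have h1 : HasDerivAt (fun t : ℝ => T - t) (-1) T := by
      simpa using (hasDerivAt_id T).const_sub T
    have h2 : HasDerivAt (fun t : ℝ => R * β * t) (R * β) T := by
      simpa using (hasDerivAt_id T).const_mul (R * β)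
    have h3 := (h1.div h2 (by positivity)).div_const B
    refine h3.congr_deriv ?_
    field_simp
    ring
  -- derivative of 2 ^ u(t) at T (note u(T) = 0)
  have hpow : HasDerivAt (fun t : ℝ => (2 : ℝ) ^ ((T - t) / (R * β * t) / B))
      (Real.log 2 * -(1 / (R * β * T * B))) T := by
    have := (hasDerivAt_const T (2 : ℝ)).rpow hu (by norm_num)
    simp only [sub_self, zero_div] at this ⊢
    convert this using 1
    simp [Real.rpow_zero]
    ring
  -- derivative of the full function
  have hL : HasDerivAt
      (fun t : ℝ =>
          (lam + c) * (α * (T - t) / (η * β * h)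
            + (t / (η * h ^ 2)) *
              (N0 * ((2 : ℝ) ^ ((T - t) / (R * β * t) / B) - 1)))
          - a * Real.log (1 + (T - t) / β))
      (a / β - (lam + c) * (α / (η * β * h)
        + N0 * Real.log 2 / (η * h ^ 2 * B * R * β))) T := by
    have hg1 : HasDerivAt (fun t : ℝ => α * (T - t) / (η * β * h))
        (-(α / (η * β * h))) T := by
      have h1 : HasDerivAt (fun t : ℝ => T - t) (-1) T := by
        simpa using (hasDerivAt_id T).const_sub T
      have := (h1.const_mul α).div_const (η * β * h)
      refine this.congr_deriv ?_
      ring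
    have hg2 : HasDerivAt
        (fun t : ℝ => (t / (η * h ^ 2)) *
            (N0 * ((2 : ℝ) ^ ((T - t) / (R * β * t) / B) - 1)))
        ((1 / (η * h ^ 2)) * (N0 * ((2 : ℝ) ^ ((T - T) / (R * β * T) / B) - 1))
          + (T / (η * h ^ 2)) * (N0 * (Real.log 2 * -(1 / (R * β * T * B))))) T := by
      have ht : HasDerivAt (fun t : ℝ => t / (η * h ^ 2)) (1 / (η * h ^ 2)) T := by
        exact (hasDerivAt_id T).div_const (η * h ^ 2)
      have hf : HasDerivAt (fun t : ℝ => N0 * ((2 : ℝ) ^ ((T - t) / (R * β * t) / B) - 1))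
          (N0 * (Real.log 2 * -(1 / (R * β * T * B)))) T := by
        exact ((hpow.sub_const 1).const_mul N0)
      exact ht.mul hf
    have hlg : HasDerivAt (fun t : ℝ => a * Real.log (1 + (T - t) / β))
        (a * (-(1 / β))) T := by
      have h1 : HasDerivAt (fun t : ℝ => 1 + (T - t) / β) (-(1 / β)) T := by
        have h0 : HasDerivAt (fun t : ℝ => T - t) (-1) T := by
          simpa using (hasDerivAt_id T).const_sub T
        have := (h0.div_const β).const_add 1
        refine this.congr_deriv ?_
        ring
      have h2 : (1 : ℝ) + (T - T) / β ≠ 0 := by simp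
      have := (h1.log h2).const_mul a
      refine this.congr_deriv ?_
      field_simp
      ring
    have := ((hg1.add hg2).const_mul (lam + c)).sub hlg
    refine this.congr_deriv ?_
    simp only [sub_self, zero_div]
    rw [Real.rpow_zero]
    field_simp
    ring
  rw [hL.deriv]
  have hden : 0 < α + N0 * Real.log 2 / (h * B * R) := by positivity
  rw [sub_neg, div_lt_iff₀ hβ]
  have e : (lam + c) * (α / (η * β * h)
        + N0 * Real.log 2 / (η * h ^ 2 * B * R * β)) * β
      = (lam + c) * (α + N0 * Real.log 2 / (h * B * R)) / (η * h) := by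
    field_simp
  rw [e, lt_div_iff₀ (by positivity : 0 < η * h)]
  rw [gt_iff_lt, sub_lt_iff_lt_add, div_lt_iff₀ hden]
  constructor <;> intro hx <;> nlinarith [hx]
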